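/- For every f ∈ L²[0,1], the Volterra operator satisfies ‖Vf‖₂ ≤ (2/π)‖f‖₂, i.e., ∫₀¹ |∫₀ˣ f(t) dt|² dx ≤ (4/π²) ∫₀¹ |f(t)|² dt. -/

import Mathlib

open MeasureTheory Real
open scoped ENNReal

noncomputable def m : Measure ℝ := volume.restrict (Set.Icc 0 1)

instance : IsFiniteMeasure m := by
  rw [m]; constructor; rw [Measure.restrict_apply_univ]; simp

lemma hasDerivAt_S (u : ℝ) : HasDerivAt (fun u => 2/π * sin (π*u/2)) (cos (π*u/2)) u := by
  have h1 : HasDerivAt (fun u : ℝ => π*u/2) (π/2) u := by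
    simpa using ((hasDerivAt_id u).const_mul π).div_const 2
  have h2 := ((Real.hasDerivAt_sin (π*u/2)).comp u h1).const_mul (2/π)
  convert h2 using 1
  · rfl
  · rfl
  · rfl
  field_simp

lemma hasDerivAt_C (u : ℝ) :
    HasDerivAt (fun u => -((2/π)^2 * cos (π*u/2))) (2/π * sin (π*u/2)) u := by
  have h1 : HasDerivAt (fun u : ℝ => π*u/2) (π/2) u := by
    simpa using ((hasDerivAt_id u).const_mul π).div_const 2
  have h2 := (((Real.hasDerivAt_cos (π*u/2)).comp u h1).const_mul ((2/π)^2)).neg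
  convert h2 using 1
  · rfl
  · rfl
  · rfl
  field_simp

lemma integral_cos_eq (x : ℝ) : ∫ t in (0:ℝ)..x, cos (π*t/2) = 2/π * sin (π*x/2) := by
  rw [intervalIntegral.integral_eq_sub_of_hasDerivAt (fun t _ => hasDerivAt_S t)
    (by apply Continuous.intervalIntegrable; continuity)]
  norm_num

lemma integral_sin_eq (t : ℝ) :
    ∫ x in t..(1:ℝ), 2/π * sin (π*x/2) = (2/π)^2 * cos (π*t/2) := by
  rw [intervalIntegral.integral_eq_sub_of_hasDerivAt (fun u _ => hasDerivAt_C u)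
    (by apply Continuous.intervalIntegrable; continuity)]
  norm_num [Real.cos_pi_div_two]

lemma ae_cos_pos : ∀ᵐ t ∂m, 0 < cos (π*t/2) := by
  have h1 : ∀ᵐ t ∂m, t ∈ Set.Icc (0:ℝ) 1 := by
    rw [m]; exact ae_restrict_mem measurableSet_Icc
  have h2 : ∀ᵐ t ∂m, t ≠ 1 := by
    rw [ae_iff]
    have : {t : ℝ | ¬ t ≠ 1} = {1} := by ext; simp
    rw [this]
    exact le_antisymm (le_trans (Measure.restrict_le_self _) (by simp)) zero_le
  filter_upwards [h1, h2] with t ht hne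
  apply Real.cos_pos_of_mem_Ioo
  constructor
  · nlinarith [pi_pos, ht.1]
  · have : t < 1 := lt_of_le_of_ne ht.2 hne
    nlinarith [pi_pos]

lemma lint_c {x : ℝ} (hx : x ∈ Set.Icc (0:ℝ) 1) :
    ∫⁻ t in Set.Ioc 0 x, ENNReal.ofReal (cos (π*t/2)) ∂m
      = ENNReal.ofReal (2/π * sin (π*x/2)) := by
  rw [m, Measure.restrict_restrict measurableSet_Ioc,
    Set.inter_eq_self_of_subset_left
      (Set.Ioc_subset_Icc_self.trans (Set.Icc_subset_Icc_right hx.2))]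
  rw [← ofReal_integral_eq_lintegral_ofReal]
  · rw [← intervalIntegral.integral_of_le hx.1, integral_cos_eq]
  · exact (Continuous.integrableOn_Ioc (by continuity))
  · filter_upwards [ae_restrict_mem measurableSet_Ioc] with t ht
    apply Real.cos_nonneg_of_mem_Icc
    constructor
    · nlinarith [pi_pos, ht.1.le]
    · nlinarith [pi_pos, ht.2, hx.2]

lemma lint_s {t : ℝ} (ht : t ∈ Set.Icc (0:ℝ) 1) :
    ∫⁻ x in Set.Ici t, ENNReal.ofReal (2/π * sin (π*x/2)) ∂m
      = ENNReal.ofReal ((2/π)^2 * cos (π*t/2)) := by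
  have hset : Set.Ici t ∩ Set.Icc 0 1 = Set.Icc t 1 := by
    ext y
    simp only [Set.mem_inter_iff, Set.mem_Ici, Set.mem_Icc]
    constructor
    · rintro ⟨h1, _, h3⟩; exact ⟨h1, h3⟩
    · rintro ⟨h1, h2⟩; exact ⟨h1, le_trans ht.1 h1, h2⟩
  rw [m, Measure.restrict_restrict measurableSet_Ici, hset,
    ← Measure.restrict_congr_set Ioc_ae_eq_Icc]
  rw [← ofReal_integral_eq_lintegral_ofReal]
  · rw [← intervalIntegral.integral_of_le ht.2, integral_sin_eq]
  · exact (Continuous.integrableOn_Ioc (by continuity))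
  · filter_upwards [ae_restrict_mem measurableSet_Ioc] with x hx
    have h0 : (0:ℝ) ≤ sin (π*x/2) := by
      apply Real.sin_nonneg_of_nonneg_of_le_pi
      · nlinarith [pi_pos, ht.1, hx.1.le]
      · nlinarith [pi_pos, hx.2]
    positivity

lemma hc_meas : Measurable (fun t : ℝ => ENNReal.ofReal (cos (π*t/2))) :=
  (Real.continuous_cos.comp (by continuity)).measurable.ennreal_ofReal

lemma stepA (g : ℝ → ℝ≥0∞) (hg : Measurable g) {x : ℝ} (hx : x ∈ Set.Icc (0:ℝ) 1) :
    (∫⁻ t in Set.Ioc 0 x, g t ∂m)^2 ≤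
      ENNReal.ofReal (2/π * sin (π*x/2)) *
        ∫⁻ t in Set.Ioc 0 x, g t^2 / ENNReal.ofReal (cos (π*t/2)) ∂m := by
  set c := fun t : ℝ => ENNReal.ofReal (cos (π*t/2)) with hc
  have hG : Measurable (fun t => g t^2 / c t) := ((hg.pow_const 2).div hc_meas)
  have hae : ∀ᵐ t ∂(m.restrict (Set.Ioc 0 x)),
      g t = (fun t => (c t)^(1/2:ℝ)) t * (fun t => (g t^2 / c t)^(1/2:ℝ)) t := by
    apply ae_restrict_of_ae
    filter_upwards [ae_cos_pos] with t htc
    have h0 : c t ≠ 0 := (ENNReal.ofReal_pos.2 htc).ne'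
    have htop : c t ≠ ∞ := ENNReal.ofReal_ne_top
    have h0' : (c t)^(1/2:ℝ) ≠ 0 := by
      simp [ENNReal.rpow_eq_zero_iff, h0, htop]
    have htop' : (c t)^(1/2:ℝ) ≠ ∞ := by
      simp [ENNReal.rpow_eq_top_iff, h0, htop]

    rw [ENNReal.div_rpow_of_nonneg _ _ (by norm_num : (0:ℝ) ≤ 1/2),
      ← ENNReal.rpow_natCast (g t) 2, ← ENNReal.rpow_mul]
    norm_num
    rw [ENNReal.mul_div_cancel h0' htop']
  have hholder := ENNReal.lintegral_mul_le_Lp_mul_Lq (m.restrict (Set.Ioc 0 x))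
    Real.HolderConjugate.two_two
    (hc_meas.pow_const (1/2:ℝ)).aemeasurable (hG.pow_const (1/2:ℝ)).aemeasurable
  have h1 : ∫⁻ t in Set.Ioc 0 x, g t ∂m
      ≤ (∫⁻ t in Set.Ioc 0 x, c t ∂m)^(1/2:ℝ) *
        (∫⁻ t in Set.Ioc 0 x, g t^2 / c t ∂m)^(1/2:ℝ) := by
    calc ∫⁻ t in Set.Ioc 0 x, g t ∂m
        = ∫⁻ t in Set.Ioc 0 x,
            ((fun t => (c t)^(1/2:ℝ)) * (fun t => (g t^2 / c t)^(1/2:ℝ))) t ∂m :=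
          lintegral_congr_ae hae
      _ ≤ (∫⁻ t in Set.Ioc 0 x, ((c t)^(1/2:ℝ))^(2:ℝ) ∂m)^(1/2) *
          (∫⁻ t in Set.Ioc 0 x, ((g t^2 / c t)^(1/2:ℝ))^(2:ℝ) ∂m)^(1/2) := hholder
      _ = (∫⁻ t in Set.Ioc 0 x, c t ∂m)^(1/2:ℝ) *
          (∫⁻ t in Set.Ioc 0 x, g t^2 / c t ∂m)^(1/2:ℝ) := by
          simp_rw [← ENNReal.rpow_mul]
          norm_num
  calc (∫⁻ t in Set.Ioc 0 x, g t ∂m)^2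
      ≤ ((∫⁻ t in Set.Ioc 0 x, c t ∂m)^(1/2:ℝ) *
          (∫⁻ t in Set.Ioc 0 x, g t^2 / c t ∂m)^(1/2:ℝ))^2 :=
        pow_le_pow_left₀ zero_le h1 2
    _ = (∫⁻ t in Set.Ioc 0 x, c t ∂m) * ∫⁻ t in Set.Ioc 0 x, g t^2 / c t ∂m := by
        rw [mul_pow, ← ENNReal.rpow_natCast (_^(1/2:ℝ)) 2,
          ← ENNReal.rpow_natCast ((∫⁻ t in Set.Ioc 0 x, g t^2 / c t ∂m)^(1/2:ℝ)) 2,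
          ← ENNReal.rpow_mul, ← ENNReal.rpow_mul]
        norm_num
    _ = ENNReal.ofReal (2/π * sin (π*x/2)) * ∫⁻ t in Set.Ioc 0 x, g t^2 / c t ∂m := by
        rw [lint_c hx]

lemma stepB (G : ℝ → ℝ≥0∞) (hG : Measurable G) :
    ∫⁻ x, ENNReal.ofReal (2/π * sin (π*x/2)) * (∫⁻ t in Set.Ioc 0 x, G t ∂m) ∂m
      ≤ ∫⁻ t, ENNReal.ofReal ((2/π)^2 * cos (π*t/2)) * G t ∂m := by
  set s := fun x : ℝ => ENNReal.ofReal (2/π * sin (π*x/2)) with hs_def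
  have hs : Measurable s := by
    apply Measurable.ennreal_ofReal; fun_prop
  set F := fun x t => (Set.Iic x).indicator (fun t => s x * G t) t with hF_def
  have hFmeas : Measurable (Function.uncurry F) := by
    have : Function.uncurry F
        = Set.indicator {p : ℝ×ℝ | p.2 ≤ p.1} (fun p => s p.1 * G p.2) := by
      funext p
      by_cases h : p.2 ≤ p.1 <;>
        simp [Function.uncurry, F, Set.indicator_apply, h, Set.mem_Iic]
    rw [this]
    exact ((hs.comp measurable_fst).mul (hG.comp measurable_snd)).indicator
      (measurableSet_le measurable_snd measurable_fst)
  have h1 : ∫⁻ x, s x * (∫⁻ t in Set.Ioc 0 x, G t ∂m) ∂m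
      ≤ ∫⁻ x, ∫⁻ t, F x t ∂m ∂m := by
    apply lintegral_mono
    intro x
    calc s x * ∫⁻ t in Set.Ioc 0 x, G t ∂m
        ≤ s x * ∫⁻ t in Set.Iic x, G t ∂m := by
          gcongr
          exact Set.Ioc_subset_Iic_self
      _ = ∫⁻ t, F x t ∂m := by
          rw [hF_def]
          simp only
          rw [lintegral_indicator measurableSet_Iic, lintegral_const_mul _ hG]
  have h2 : ∫⁻ x, ∫⁻ t, F x t ∂m ∂m = ∫⁻ t, ∫⁻ x, F x t ∂m ∂m :=
    lintegral_lintegral_swap hFmeas.aemeasurable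
  have h3 : ∫⁻ t, ∫⁻ x, F x t ∂m ∂m
      ≤ ∫⁻ t, ENNReal.ofReal ((2/π)^2 * cos (π*t/2)) * G t ∂m := by
    apply lintegral_mono_ae
    have hmem : ∀ᵐ t ∂m, t ∈ Set.Icc (0:ℝ) 1 := by
      rw [m]; exact ae_restrict_mem measurableSet_Icc
    filter_upwards [hmem] with t ht
    refine le_of_eq ?_
    calc ∫⁻ x, F x t ∂m
        = ∫⁻ x, (Set.Ici t).indicator (fun x => s x * G t) x ∂m :=
          lintegral_congr fun x => by
            by_cases h : t ≤ x <;>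
              simp [F, Set.indicator_apply, h, Set.mem_Iic, Set.mem_Ici]
      _ = ∫⁻ x in Set.Ici t, s x * G t ∂m := lintegral_indicator measurableSet_Ici _
      _ = (∫⁻ x in Set.Ici t, s x ∂m) * G t := lintegral_mul_const _ hs
      _ = ENNReal.ofReal ((2/π)^2 * cos (π*t/2)) * G t := by rw [lint_s ht]
  exact h1.trans (h2 ▸ h3)

theorem volterra_norm_apply_le (V : Lp ℂ 2 m →L[ℂ] Lp ℂ 2 m)
    (hV : ∀ f : Lp ℂ 2 m, V f =ᵐ[m] fun x => ∫ t in Set.Ioc 0 x, f t ∂m) :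
    ∀ f : Lp ℂ 2 m, ‖V f‖ ≤ (2 / π) * ‖f‖ := by
  intro f
  set g : ℝ → ℝ≥0∞ := fun t => (‖f t‖₊ : ℝ≥0∞) with hg_def
  have hg : Measurable g := (Lp.stronglyMeasurable f).measurable.nnnorm.coe_nnreal_ennreal
  set c := fun t : ℝ => ENNReal.ofReal (cos (π*t/2)) with hc_def
  set G := fun t => g t^2 / c t with hG_def
  have hGmeas : Measurable G := (hg.pow_const 2).div hc_meas
  have key : ∫⁻ x, (‖∫ t in Set.Ioc 0 x, f t ∂m‖₊ : ℝ≥0∞)^2 ∂m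
      ≤ ENNReal.ofReal (2/π)^2 * ∫⁻ t, g t^2 ∂m := by
    calc ∫⁻ x, (‖∫ t in Set.Ioc 0 x, f t ∂m‖₊ : ℝ≥0∞)^2 ∂m
        ≤ ∫⁻ x, ENNReal.ofReal (2/π * sin (π*x/2)) *
            (∫⁻ t in Set.Ioc 0 x, G t ∂m) ∂m := by
          apply lintegral_mono_ae
          have hmem : ∀ᵐ x ∂m, x ∈ Set.Icc (0:ℝ) 1 := by
            rw [m]; exact ae_restrict_mem measurableSet_Icc
          filter_upwards [hmem] with x hx
          calc (‖∫ t in Set.Ioc 0 x, f t ∂m‖₊ : ℝ≥0∞)^2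
              ≤ (∫⁻ t in Set.Ioc 0 x, g t ∂m)^2 := by
                gcongr
                exact enorm_integral_le_lintegral_enorm _
            _ ≤ _ := stepA g hg hx
      _ ≤ ∫⁻ t, ENNReal.ofReal ((2/π)^2 * cos (π*t/2)) * G t ∂m := stepB G hGmeas
      _ ≤ ENNReal.ofReal (2/π)^2 * ∫⁻ t, g t^2 ∂m := by
          rw [← lintegral_const_mul _ (hg.pow_const 2)]
          apply lintegral_mono_ae
          filter_upwards [ae_cos_pos] with t htc
          have h0 : c t ≠ 0 := (ENNReal.ofReal_pos.2 htc).ne'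
          have htop : c t ≠ ∞ := ENNReal.ofReal_ne_top
          have hsplit : ENNReal.ofReal ((2/π)^2 * cos (π*t/2))
              = ENNReal.ofReal (2/π)^2 * c t := by
            rw [ENNReal.ofReal_mul (by positivity), ← ENNReal.ofReal_pow (by positivity)]
          rw [hsplit, mul_assoc, hG_def]
          rw [ENNReal.mul_div_cancel h0 htop]
  -- norm assembly
  set B := ∫⁻ t, g t ^ 2 ∂m with hB_def
  have htoReal : (2 : ℝ≥0∞).toReal = 2 := by simp
  have hfB : eLpNorm f 2 m = B ^ (1/2:ℝ) := by
    rw [eLpNorm_eq_lintegral_rpow_enorm_toReal two_ne_zero ENNReal.ofNat_ne_top, htoReal]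
    simp_rw [ENNReal.rpow_two]
    rfl
  have hVB : eLpNorm (V f) 2 m
      = (∫⁻ x, (‖∫ t in Set.Ioc 0 x, f t ∂m‖₊ : ℝ≥0∞)^2 ∂m) ^ (1/2:ℝ) := by
    rw [eLpNorm_congr_ae (hV f),
      eLpNorm_eq_lintegral_rpow_enorm_toReal two_ne_zero ENNReal.ofNat_ne_top, htoReal]
    simp_rw [ENNReal.rpow_two]
    rfl
  have hle : eLpNorm (V f) 2 m ≤ ENNReal.ofReal (2/π) * eLpNorm f 2 m := by
    rw [hVB, hfB]
    calc (∫⁻ x, (‖∫ t in Set.Ioc 0 x, f t ∂m‖₊ : ℝ≥0∞)^2 ∂m) ^ (1/2:ℝ)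
        ≤ (ENNReal.ofReal (2/π)^2 * B) ^ (1/2:ℝ) :=
          ENNReal.rpow_le_rpow key (by norm_num)
      _ = ENNReal.ofReal (2/π) * B ^ (1/2:ℝ) := by
          rw [ENNReal.mul_rpow_of_nonneg _ _ (by norm_num : (0:ℝ) ≤ 1/2),
            ← ENNReal.rpow_two, ← ENNReal.rpow_mul]
          norm_num
  rw [Lp.norm_def, Lp.norm_def]
  have hne : ENNReal.ofReal (2/π) * eLpNorm f 2 m ≠ ∞ :=
    ENNReal.mul_ne_top ENNReal.ofReal_ne_top (Lp.eLpNorm_ne_top f)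
  calc (eLpNorm (V f) 2 m).toReal
      ≤ (ENNReal.ofReal (2/π) * eLpNorm f 2 m).toReal := ENNReal.toReal_mono hne hle
    _ = 2/π * (eLpNorm f 2 m).toReal := by
        rw [ENNReal.toReal_mul, ENNReal.toReal_ofReal (by positivity)]
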